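/- Let R₁ and R₂ be two sets of m points each in ℝ² with L∞-metric such that there exists a bijection σ : R₁ → R₂ with d(r, σ(r)) ≤ 2δ for all r ∈ R₁ (i.e., bottleneck distance at most 2δ). Let r₁ ∈ R₁ and r₂ ∈ R₂ be points such that the number of points of R₁ strictly above the horizontal line through r₁ equals the number of points of R₂ strictly above the horizontal line through r₂, and similarly for points strictly below, strictly left, and strictly right. Then d(r₁, r₂) ≤ 2δ. -/

import Mathlib

/-- L∞ distance in the plane. -/
def dinf (p q : ℝ × ℝ) : ℝ := max |p.1 - q.1| |p.2 - q.2|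

lemma key (δ : ℝ) (R₁ R₂ : Finset (ℝ × ℝ)) (hcard : R₁.card = R₂.card)
    (σ : ℝ × ℝ → ℝ × ℝ) (hσ : Set.BijOn σ (R₁ : Set (ℝ × ℝ)) (R₂ : Set (ℝ × ℝ)))
    (f : ℝ × ℝ → ℝ) (hf : ∀ r ∈ R₁, f (σ r) ≤ f r + 2 * δ)
    (a : ℝ) (r₂ : ℝ × ℝ) (hr₂ : r₂ ∈ R₂)
    (hcount : (R₁.filter fun p => f p > a).card = (R₂.filter fun p => f p > f r₂).card) :
    f r₂ ≤ a + 2 * δ := by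
  by_contra h
  push_neg at h
  classical
  set b := f r₂ with hb
  -- A₁ maps into left part of R₂
  have hmap : ∀ p ∈ R₁.filter (fun p => ¬ f p > a), σ p ∈ R₂.filter (fun p => f p < b) := by
    intro p hp
    rw [Finset.mem_filter] at hp ⊢
    refine ⟨hσ.mapsTo hp.1, ?_⟩
    have := hf p hp.1
    have : f (σ p) ≤ a + 2 * δ := le_trans this (by linarith [not_lt.mp hp.2])
    linarith
  have hinj : Set.InjOn σ (R₁.filter (fun p => ¬ f p > a) : Set (ℝ × ℝ)) := by
    apply hσ.injOn.mono
    intro p hp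
    simp only [Finset.coe_filter, Set.mem_setOf_eq] at hp
    exact hp.1
  have hle : (R₁.filter (fun p => ¬ f p > a)).card ≤ (R₂.filter (fun p => f p < b)).card :=
    Finset.card_le_card_of_injOn σ hmap hinj
  have hsplit : (R₁.filter (fun p => f p > a)).card + (R₁.filter (fun p => ¬ f p > a)).card
      = R₁.card := Finset.card_filter_add_card_filter_not _
  have hdisj : Disjoint (R₂.filter (fun p => f p < b)) (R₂.filter (fun p => f p > b)) := by
    rw [Finset.disjoint_left]
    intro x hx hx'
    rw [Finset.mem_filter] at hx hx'
    exact absurd hx'.2 (not_lt.mpr (le_of_lt hx.2))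
  have hsub : (R₂.filter (fun p => f p < b)) ∪ (R₂.filter (fun p => f p > b)) ⊆ R₂.erase r₂ := by
    intro x hx
    rw [Finset.mem_erase]
    rcases Finset.mem_union.mp hx with hx' | hx' <;> rw [Finset.mem_filter] at hx'
    · exact ⟨fun he => absurd hx'.2 (by rw [he]; exact lt_irrefl b), hx'.1⟩
    · exact ⟨fun he => absurd hx'.2 (by rw [he]; exact lt_irrefl b), hx'.1⟩
  have h1 : (R₂.filter (fun p => f p < b)).card + (R₂.filter (fun p => f p > b)).card
      ≤ R₂.card - 1 := by
    rw [← Finset.card_union_of_disjoint hdisj]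
    calc _ ≤ (R₂.erase r₂).card := Finset.card_le_card hsub
      _ = R₂.card - 1 := Finset.card_erase_of_mem hr₂
  have hpos : 1 ≤ R₂.card := Finset.card_pos.mpr ⟨r₂, hr₂⟩
  omega

/-- If two point sets admit a perfect matching with all matched L∞-distances at most 2δ,
and two points `r₁ ∈ R₁`, `r₂ ∈ R₂` have equal counts of points of their respective sets
strictly above, strictly below, strictly left and strictly right of them, then
`r₁` and `r₂` are at L∞-distance at most 2δ. -/
theorem same_quadrant_counts_close (δ : ℝ) (hδ : 0 ≤ δ) (m : ℕ)
    (R₁ R₂ : Finset (ℝ × ℝ)) (hR₁ : R₁.card = m) (hR₂ : R₂.card = m)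
    (σ : ℝ × ℝ → ℝ × ℝ) (hσ : Set.BijOn σ (R₁ : Set (ℝ × ℝ)) (R₂ : Set (ℝ × ℝ)))
    (hmatch : ∀ r ∈ R₁, dinf r (σ r) ≤ 2 * δ)
    (r₁ : ℝ × ℝ) (hr₁ : r₁ ∈ R₁) (r₂ : ℝ × ℝ) (hr₂ : r₂ ∈ R₂)
    (habove : (R₁.filter fun p => p.2 > r₁.2).card = (R₂.filter fun p => p.2 > r₂.2).card)
    (hbelow : (R₁.filter fun p => p.2 < r₁.2).card = (R₂.filter fun p => p.2 < r₂.2).card)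
    (hleft : (R₁.filter fun p => p.1 < r₁.1).card = (R₂.filter fun p => p.1 < r₂.1).card)
    (hright : (R₁.filter fun p => p.1 > r₁.1).card = (R₂.filter fun p => p.1 > r₂.1).card) :
    dinf r₁ r₂ ≤ 2 * δ := by
  have hcard : R₁.card = R₂.card := by rw [hR₁, hR₂]
  have hx : ∀ r ∈ R₁, |r.1 - (σ r).1| ≤ 2 * δ := fun r hr =>
    le_trans (le_max_left _ _) (hmatch r hr)
  have hy : ∀ r ∈ R₁, |r.2 - (σ r).2| ≤ 2 * δ := fun r hr =>
    le_trans (le_max_right _ _) (hmatch r hr)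
  have h1 : r₂.1 ≤ r₁.1 + 2 * δ :=
    key δ R₁ R₂ hcard σ hσ Prod.fst
      (fun r hr => by have := abs_le.mp (hx r hr); linarith [this.1, this.2]) r₁.1 r₂ hr₂ hright
  have h2 : -r₂.1 ≤ -r₁.1 + 2 * δ :=
    key δ R₁ R₂ hcard σ hσ (fun p => -p.1)
      (fun r hr => by have := abs_le.mp (hx r hr); linarith [this.1, this.2])
      (-r₁.1) r₂ hr₂ (by simp only [gt_iff_lt, neg_lt_neg_iff]; exact hleft)
  have h3 : r₂.2 ≤ r₁.2 + 2 * δ :=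
    key δ R₁ R₂ hcard σ hσ Prod.snd
      (fun r hr => by have := abs_le.mp (hy r hr); linarith [this.1, this.2]) r₁.2 r₂ hr₂ habove
  have h4 : -r₂.2 ≤ -r₁.2 + 2 * δ :=
    key δ R₁ R₂ hcard σ hσ (fun p => -p.2)
      (fun r hr => by have := abs_le.mp (hy r hr); linarith [this.1, this.2])
      (-r₁.2) r₂ hr₂ (by simp only [gt_iff_lt, neg_lt_neg_iff]; exact hbelow)
  rw [dinf]
  apply max_le <;> rw [abs_le] <;> constructor <;> linarith
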